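/- arXiv:2405.18341 — 2 statements merged into one kernel-verified Lean document; each statement's English description precedes it below -/
import Mathlib

section
/- Every function of bounded variation f on [a,b] is RDS integrable with respect to every α of bounded variation on [a,b]. -/
open Set Filter Topology
open scoped Classical

noncomputable section

/-- A partition `a = x 0 < x 1 < ... < x n = b` of `[a,b]`. -/
structure RDSPartition (a b : ℝ) where
  n : ℕ
  x : ℕ → ℝ
  mono : ∀ i, i < n → x i < x (i + 1)
  first : x 0 = a
  last : x n = b

/-- Right limit `α(t+)`, with the convention `α(b+) = α(b)` at the right endpoint. -/
def rLim (b : ℝ) (α : ℝ → ℝ) (t : ℝ) : ℝ :=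
  if t < b then Function.rightLim α t else α t

/-- Left limit `α(t-)`, with the convention `α(a-) = α(a)` at the left endpoint. -/
def lLim (a : ℝ) (α : ℝ → ℝ) (t : ℝ) : ℝ :=
  if a < t then Function.leftLim α t else α t

/-- `α`-length of the singleton `{t}` inside `[a,b]`: `α(t+) - α(t-)`. -/
def muPt (a b : ℝ) (α : ℝ → ℝ) (t : ℝ) : ℝ :=
  rLim b α t - lLim a α t

/-- `α`-length of the open interval `(c,d)` inside `[a,b]`: `α(d-) - α(c+)`. -/
def muIoo (a b : ℝ) (α : ℝ → ℝ) (c d : ℝ) : ℝ :=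
  lLim a α d - rLim b α c

/-- `f` is a step function with respect to the partition `P`: it is constant on each
open subinterval `(x (i-1), x i)` of `P`. -/
def IsStepOn (a b : ℝ) (f : ℝ → ℝ) (P : RDSPartition a b) : Prop :=
  ∀ i, i < P.n → ∀ s ∈ Set.Ioo (P.x i) (P.x (i + 1)),
    f s = f ((P.x i + P.x (i + 1)) / 2)

/-- The RDS integral of a step function with respect to the partition `P`:
`Σ_{i=0}^n f(x_i) μ_α({x_i}) + Σ_{i=1}^n c_i μ_α(I_i)`. -/
def stepInt (a b : ℝ) (α : ℝ → ℝ) (P : RDSPartition a b) (f : ℝ → ℝ) : ℝ :=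
  (∑ i ∈ Finset.range (P.n + 1), f (P.x i) * muPt a b α (P.x i)) +
    ∑ i ∈ Finset.range P.n,
      f ((P.x i + P.x (i + 1)) / 2) * muIoo a b α (P.x i) (P.x (i + 1))

/-- Upper envelope: infimum of RDS step integrals of step functions above `f` on `[a,b]`. -/
def upperRDS (a b : ℝ) (α f : ℝ → ℝ) : ℝ :=
  sInf { r | ∃ (u : ℝ → ℝ) (P : RDSPartition a b), IsStepOn a b u P ∧
    (∀ t ∈ Set.Icc a b, f t ≤ u t) ∧ r = stepInt a b α P u }

/-- Lower envelope: supremum of RDS step integrals of step functions below `f` on `[a,b]`. -/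
def lowerRDS (a b : ℝ) (α f : ℝ → ℝ) : ℝ :=
  sSup { r | ∃ (v : ℝ → ℝ) (P : RDSPartition a b), IsStepOn a b v P ∧
    (∀ t ∈ Set.Icc a b, v t ≤ f t) ∧ r = stepInt a b α P v }

/-- RDS integrability with respect to an increasing integrator. -/
def RDSIntegrableInc (a b : ℝ) (α f : ℝ → ℝ) : Prop :=
  lowerRDS a b α f = upperRDS a b α f

/-- The RDS integral with respect to an increasing integrator. -/
def RDSIntegralInc (a b : ℝ) (α f : ℝ → ℝ) : ℝ := upperRDS a b α f

/-- RDS integrability with respect to a BV integrator: some Jordan decomposition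
into increasing functions works. -/
def RDSIntegrable (a b : ℝ) (α f : ℝ → ℝ) : Prop :=
  ∃ αp αm : ℝ → ℝ, MonotoneOn αp (Set.Icc a b) ∧ MonotoneOn αm (Set.Icc a b) ∧
    (∀ t ∈ Set.Icc a b, α t = αp t - αm t) ∧
    RDSIntegrableInc a b αp f ∧ RDSIntegrableInc a b αm f

/-- The RDS integral with respect to a BV integrator. -/
def RDSIntegral (a b : ℝ) (α f : ℝ → ℝ) : ℝ :=
  if h : RDSIntegrable a b α f then
    RDSIntegralInc a b h.choose f - RDSIntegralInc a b h.choose_spec.choose f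
  else 0

/-- `f` is bounded on `[a,b]`. -/
def BddOn (a b : ℝ) (f : ℝ → ℝ) : Prop :=
  ∃ M : ℝ, ∀ t ∈ Set.Icc a b, |f t| ≤ M


end

noncomputable section RDSProof

open MeasureTheory

namespace RDSPartition

variable {a b : ℝ} (P : RDSPartition a b)

lemma x_mono_le {i j : ℕ} (hij : i ≤ j) (hj : j ≤ P.n) : P.x i ≤ P.x j := by
  induction j with
  | zero => simp_all
  | succ k ih =>
    rcases Nat.eq_or_lt_of_le hij with rfl | h
    · rfl
    · exact le_trans (ih (Nat.lt_succ_iff.1 h) (le_trans (Nat.le_succ k) hj))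
        (P.mono k (Nat.lt_of_succ_le hj)).le

lemma x_lt {i j : ℕ} (hij : i < j) (hj : j ≤ P.n) : P.x i < P.x j :=
  lt_of_lt_of_le (P.mono i (lt_of_lt_of_le hij hj))
    (P.x_mono_le hij hj)

lemma x_mem {i : ℕ} (hi : i ≤ P.n) : P.x i ∈ Set.Icc a b := by
  constructor
  · exact le_of_eq_of_le P.first.symm (P.x_mono_le (Nat.zero_le i) hi)
  · exact le_of_le_of_eq (P.x_mono_le hi le_rfl) P.last

lemma x_inj {i j : ℕ} (hi : i ≤ P.n) (hj : j ≤ P.n) (h : P.x i = P.x j) : i = j := by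
  rcases lt_trichotomy i j with h' | h' | h'
  · exact absurd h (ne_of_lt (P.x_lt h' hj))
  · exact h'
  · exact absurd h.symm (ne_of_lt (P.x_lt h' hi))

lemma mid_mem {i : ℕ} (hi : i < P.n) :
    (P.x i + P.x (i + 1)) / 2 ∈ Set.Ioo (P.x i) (P.x (i + 1)) := by
  constructor <;> nlinarith [P.mono i hi]

lemma node_not_mem_Ioo {k i : ℕ} (hk : k ≤ P.n) (hi : i < P.n) :
    P.x k ∉ Set.Ioo (P.x i) (P.x (i + 1)) := by
  intro hmem
  rcases le_or_gt k i with h | h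
  · exact absurd (P.x_mono_le h hi.le) (not_le.2 hmem.1)
  · exact absurd (P.x_mono_le h hk) (not_le.2 hmem.2)

lemma Ioo_disjoint {i j : ℕ} (hi : i < P.n) (hj : j < P.n) (hij : i ≠ j) {t : ℝ}
    (h1 : t ∈ Set.Ioo (P.x i) (P.x (i + 1))) (h2 : t ∈ Set.Ioo (P.x j) (P.x (j + 1))) : False := by
  rcases lt_or_gt_of_ne hij with h | h
  · exact absurd (lt_of_lt_of_le h1.2 (P.x_mono_le h hj.le)) (not_lt.2 h2.1.le)
  · exact absurd (lt_of_lt_of_le h2.2 (P.x_mono_le h hi.le)) (not_lt.2 h1.1.le)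

lemma cover {t : ℝ} (ht : t ∈ Set.Icc a b) :
    (∃ i ≤ P.n, t = P.x i) ∨ ∃ i < P.n, t ∈ Set.Ioo (P.x i) (P.x (i + 1)) := by
  classical
  set k := Nat.findGreatest (fun i => P.x i ≤ t) P.n with hk
  have h0 : P.x 0 ≤ t := by rw [P.first]; exact ht.1
  have hkn : k ≤ P.n := Nat.findGreatest_le P.n
  have hxk : P.x k ≤ t := by
    have := Nat.findGreatest_spec (P := fun i => P.x i ≤ t) (Nat.zero_le P.n) h0
    simpa [hk] using this
  rcases eq_or_lt_of_le hxk with heq | hlt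
  · exact Or.inl ⟨k, hkn, heq.symm⟩
  · have hkln : k < P.n := by
      rcases eq_or_lt_of_le hkn with heq2 | h
      · exact absurd (le_of_le_of_eq ht.2 (heq2 ▸ P.last).symm) (not_le.2 hlt)
      · exact h
    refine Or.inr ⟨k, hkln, hlt, ?_⟩
    by_contra hcon
    exact Nat.findGreatest_is_greatest (Nat.lt_succ_self k) hkln (not_lt.1 hcon)

/-- The step function on `P` with values `c i` at nodes and `d i` on open subintervals. -/
def psum (P : RDSPartition a b) (c d : ℕ → ℝ) : ℝ → ℝ := fun t =>
  (∑ i ∈ Finset.range (P.n + 1), Set.indicator {P.x i} (fun _ => c i) t) +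
    ∑ i ∈ Finset.range P.n, Set.indicator (Set.Ioo (P.x i) (P.x (i + 1))) (fun _ => d i) t

lemma psum_node (c d : ℕ → ℝ) {k : ℕ} (hk : k ≤ P.n) : P.psum c d (P.x k) = c k := by
  rw [psum]
  have h1 : (∑ i ∈ Finset.range (P.n + 1), Set.indicator {P.x i} (fun _ => c i) (P.x k)) = c k := by
    rw [Finset.sum_eq_single k]
    · simp [Set.indicator_of_mem]
    · intro i hi hik
      apply Set.indicator_of_notMem
      simp only [Set.mem_singleton_iff]
      exact fun h => hik (P.x_inj (Nat.lt_succ_iff.1 (Finset.mem_range.1 hi)) hk h.symm)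
    · intro h; exact absurd (Finset.mem_range.2 (Nat.lt_succ_of_le hk)) h
  have h2 : (∑ i ∈ Finset.range P.n,
      Set.indicator (Set.Ioo (P.x i) (P.x (i + 1))) (fun _ => d i) (P.x k)) = 0 := by
    apply Finset.sum_eq_zero
    intro i hi
    exact Set.indicator_of_notMem (P.node_not_mem_Ioo hk (Finset.mem_range.1 hi)) _
  rw [h1, h2, add_zero]

lemma psum_Ioo (c d : ℕ → ℝ) {i : ℕ} (hi : i < P.n) {t : ℝ}
    (ht : t ∈ Set.Ioo (P.x i) (P.x (i + 1))) : P.psum c d t = d i := by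
  rw [psum]
  have h1 : (∑ j ∈ Finset.range (P.n + 1), Set.indicator {P.x j} (fun _ => c j) t) = 0 := by
    apply Finset.sum_eq_zero
    intro j hj
    apply Set.indicator_of_notMem
    simp only [Set.mem_singleton_iff]
    intro h
    exact P.node_not_mem_Ioo (Nat.lt_succ_iff.1 (Finset.mem_range.1 hj)) hi (h ▸ ht)
  have h2 : (∑ j ∈ Finset.range P.n,
      Set.indicator (Set.Ioo (P.x j) (P.x (j + 1))) (fun _ => d j) t) = d i := by
    rw [Finset.sum_eq_single i]
    · exact Set.indicator_of_mem ht _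
    · intro j hj hji
      exact Set.indicator_of_notMem
        (fun hmem => P.Ioo_disjoint hi (Finset.mem_range.1 hj) (Ne.symm hji) ht hmem) _
    · intro h; exact absurd (Finset.mem_range.2 hi) h
  rw [h1, h2, zero_add]

lemma Ioo_subset {i : ℕ} (hi : i < P.n) :
    Set.Ioo (P.x i) (P.x (i + 1)) ⊆ Set.Icc a b :=
  Set.Ioo_subset_Icc_self.trans (Set.Icc_subset_Icc (P.x_mem hi.le).1
    (P.x_mem (show i + 1 ≤ P.n from hi)).2)

lemma psum_zero (c d : ℕ → ℝ) {t : ℝ} (ht : t ∉ Set.Icc a b) : P.psum c d t = 0 := by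
  rw [psum]
  have h1 : (∑ i ∈ Finset.range (P.n + 1), Set.indicator {P.x i} (fun _ => c i) t) = 0 := by
    apply Finset.sum_eq_zero
    intro i hi
    apply Set.indicator_of_notMem
    simp only [Set.mem_singleton_iff]
    intro h
    exact ht (h ▸ P.x_mem (Nat.lt_succ_iff.1 (Finset.mem_range.1 hi)))
  have h2 : (∑ i ∈ Finset.range P.n,
      Set.indicator (Set.Ioo (P.x i) (P.x (i + 1))) (fun _ => d i) t) = 0 := by
    apply Finset.sum_eq_zero
    intro i hi
    exact Set.indicator_of_notMem
      (fun hmem => ht (P.Ioo_subset (Finset.mem_range.1 hi) hmem)) _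
  rw [h1, h2, add_zero]

lemma isStepOn_psum (c d : ℕ → ℝ) : IsStepOn a b (P.psum c d) P := by
  intro i hi s hs
  rw [P.psum_Ioo c d hi hs, P.psum_Ioo c d hi (P.mid_mem hi)]

lemma psum_measurable (c d : ℕ → ℝ) : Measurable (P.psum c d) := by
  apply Measurable.add
  · exact Finset.measurable_sum _ fun i _ =>
      (measurable_const).indicator (measurableSet_singleton _)
  · exact Finset.measurable_sum _ fun i _ =>
      (measurable_const).indicator measurableSet_Ioo

lemma psum_integrable (c d : ℕ → ℝ) (μ : Measure ℝ) [IsFiniteMeasure μ] :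
    Integrable (P.psum c d) μ := by
  apply Integrable.add
  · exact integrable_finset_sum _ fun i _ =>
      (integrable_const _).indicator (measurableSet_singleton _)
  · exact integrable_finset_sum _ fun i _ =>
      (integrable_const _).indicator measurableSet_Ioo

lemma psum_integral (c d : ℕ → ℝ) (μ : Measure ℝ) [IsFiniteMeasure μ] :
    ∫ t, P.psum c d t ∂μ =
      (∑ i ∈ Finset.range (P.n + 1), c i * (μ {P.x i}).toReal) +
        ∑ i ∈ Finset.range P.n, d i * (μ (Set.Ioo (P.x i) (P.x (i + 1)))).toReal := by
  simp only [psum]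
  rw [integral_add, integral_finset_sum, integral_finset_sum]
  · congr 1
    · refine Finset.sum_congr rfl fun i _ => ?_
      rw [integral_indicator_const _ (measurableSet_singleton _)]
      simp [mul_comm, Measure.real]
    · refine Finset.sum_congr rfl fun i _ => ?_
      rw [integral_indicator_const _ measurableSet_Ioo]
      simp [mul_comm, Measure.real]
  · exact fun i _ => (integrable_const _).indicator measurableSet_Ioo
  · exact fun i _ => (integrable_const _).indicator (measurableSet_singleton _)
  · exact integrable_finset_sum _ fun i _ =>
      (integrable_const _).indicator (measurableSet_singleton _)
  · exact integrable_finset_sum _ fun i _ =>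
      (integrable_const _).indicator measurableSet_Ioo

end RDSPartition

section Meas

open Function (leftLim rightLim)

variable {a b : ℝ} {β : ℝ → ℝ}

lemma rightLim_of_const_right (hβ : Monotone β) (hcb : ∀ t, b ≤ t → β t = β b)
    {t : ℝ} (ht : b ≤ t) : rightLim β t = β t := by
  refine le_antisymm ?_ (hβ.le_rightLim le_rfl)
  have h1 : rightLim β t ≤ β (t + 1) := hβ.rightLim_le (lt_add_one t)
  rw [hcb (t + 1) (by linarith), hcb t ht] at *
  exact h1

lemma leftLim_of_const_left (hβ : Monotone β) (hca : ∀ t, t ≤ a → β t = β a)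
    {t : ℝ} (ht : t ≤ a) : leftLim β t = β t := by
  refine le_antisymm (hβ.leftLim_le le_rfl) ?_
  have h1 : β (t - 1) ≤ leftLim β t := hβ.le_leftLim (by linarith)
  rw [hca (t - 1) (by linarith), hca t ht] at *
  exact h1

lemma leftLim_rightLim' (hβ : Monotone β) (t : ℝ) :
    leftLim (rightLim β) t = leftLim β t := by
  apply leftLim_eq_of_tendsto
  apply tendsto_of_tendsto_of_tendsto_of_le_of_le' (hβ.tendsto_leftLim t)
    tendsto_const_nhds
  · exact Filter.Eventually.of_forall fun x => hβ.le_rightLim le_rfl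
  · exact eventually_mem_nhdsWithin.mono fun x hx => hβ.rightLim_le_leftLim hx

lemma F_tendsto_atBot (hβ : Monotone β) (hca : ∀ t, t ≤ a → β t = β a) : Filter.Tendsto hβ.stieltjesFunction Filter.atBot (𝓝 (β a)) := by
  apply Filter.Tendsto.congr' (f₁ := fun _ => β a) _ tendsto_const_nhds
  filter_upwards [Filter.eventually_lt_atBot a] with x hx
  have h1 : rightLim β x ≤ β a := by
    have h := hβ.rightLim_le (show x < (x + a) / 2 by linarith)
    rwa [hca ((x + a) / 2) (by linarith)] at h
  have h2 : β a ≤ rightLim β x := by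
    have h := hβ.le_rightLim (le_refl x)
    rwa [hca x hx.le] at h
  rw [hβ.stieltjesFunction_eq]
  exact le_antisymm h2 h1

lemma F_tendsto_atTop (hβ : Monotone β) (hcb : ∀ t, b ≤ t → β t = β b) : Filter.Tendsto hβ.stieltjesFunction Filter.atTop (𝓝 (β b)) := by
  apply Filter.Tendsto.congr' (f₁ := fun _ => β b) _ tendsto_const_nhds
  filter_upwards [Filter.eventually_ge_atTop b] with x hx
  rw [hβ.stieltjesFunction_eq, rightLim_of_const_right hβ hcb hx]
  exact (hcb x hx).symm

lemma F_finite (hβ : Monotone β) (hca : ∀ t, t ≤ a → β t = β a)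
    (hcb : ∀ t, b ≤ t → β t = β b) : IsFiniteMeasure hβ.stieltjesFunction.measure :=
  hβ.stieltjesFunction.isFiniteMeasure (F_tendsto_atBot hβ hca) (F_tendsto_atTop hβ hcb)

lemma rLim_eq (hβ : Monotone β) (hcb : ∀ t, b ≤ t → β t = β b)
    {t : ℝ} (ht : t ∈ Set.Icc a b) : rLim b β t = rightLim β t := by
  rw [rLim]
  rcases lt_or_eq_of_le ht.2 with h | h
  · rw [if_pos h]
  · rw [if_neg (by rw [h]; exact lt_irrefl b), h,
      rightLim_of_const_right hβ hcb le_rfl]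

lemma lLim_eq (hβ : Monotone β) (hca : ∀ t, t ≤ a → β t = β a)
    {t : ℝ} (ht : t ∈ Set.Icc a b) : lLim a β t = leftLim β t := by
  rw [lLim]
  rcases lt_or_eq_of_le ht.1 with h | h
  · rw [if_pos h]
  · rw [if_neg (by rw [← h]; exact lt_irrefl a), ← h,
      leftLim_of_const_left hβ hca le_rfl]

lemma muPt_eq (hβ : Monotone β) (hca : ∀ t, t ≤ a → β t = β a)
    (hcb : ∀ t, b ≤ t → β t = β b) {t : ℝ} (ht : t ∈ Set.Icc a b) :
    muPt a b β t = (hβ.stieltjesFunction.measure {t}).toReal := by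
  rw [StieltjesFunction.measure_singleton]
  have h1 : ⇑hβ.stieltjesFunction = rightLim β := funext fun x => hβ.stieltjesFunction_eq x
  rw [h1, leftLim_rightLim' hβ t, muPt, rLim_eq hβ hcb ht, lLim_eq hβ hca ht,
    ENNReal.toReal_ofReal (sub_nonneg.2 (hβ.leftLim_le_rightLim le_rfl))]

lemma muIoo_eq (hβ : Monotone β) (hca : ∀ t, t ≤ a → β t = β a)
    (hcb : ∀ t, b ≤ t → β t = β b) {c d : ℝ} (hc : a ≤ c) (hcd : c < d) (hd : d ≤ b) :
    muIoo a b β c d = (hβ.stieltjesFunction.measure (Set.Ioo c d)).toReal := by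
  rw [StieltjesFunction.measure_Ioo]
  have h1 : ⇑hβ.stieltjesFunction = rightLim β := funext fun x => hβ.stieltjesFunction_eq x
  rw [h1, leftLim_rightLim' hβ d, muIoo,
    rLim_eq hβ hcb ⟨hc, le_trans hcd.le hd⟩, lLim_eq hβ hca ⟨le_trans hc hcd.le, hd⟩,
    ENNReal.toReal_ofReal (sub_nonneg.2 (hβ.rightLim_le_leftLim hcd))]

lemma stepInt_eq_integral (hβ : Monotone β) (hca : ∀ t, t ≤ a → β t = β a)
    (hcb : ∀ t, b ≤ t → β t = β b) (P : RDSPartition a b) (u : ℝ → ℝ) :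
    stepInt a b β P u = ∫ t, P.psum (fun i => u (P.x i))
      (fun i => u ((P.x i + P.x (i + 1)) / 2)) t ∂hβ.stieltjesFunction.measure := by
  have := F_finite hβ hca hcb
  rw [RDSPartition.psum_integral, stepInt]
  congr 1
  · refine Finset.sum_congr rfl fun i hi => ?_
    rw [muPt_eq hβ hca hcb (P.x_mem (Nat.lt_succ_iff.1 (Finset.mem_range.1 hi)))]
  · refine Finset.sum_congr rfl fun i hi => ?_
    have hi' := Finset.mem_range.1 hi
    rw [muIoo_eq hβ hca hcb (P.x_mem hi'.le).1 (P.mono i hi')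
      (P.x_mem (show i + 1 ≤ P.n from hi')).2]

/-- On `[a,b]`, the canonical simple representative agrees with a step function. -/
lemma psum_eq_self {P : RDSPartition a b} {u : ℝ → ℝ} (hu : IsStepOn a b u P)
    {t : ℝ} (ht : t ∈ Set.Icc a b) :
    P.psum (fun i => u (P.x i)) (fun i => u ((P.x i + P.x (i + 1)) / 2)) t = u t := by
  rcases P.cover ht with ⟨i, hi, rfl⟩ | ⟨i, hi, hmem⟩
  · exact P.psum_node _ _ hi
  · rw [P.psum_Ioo _ _ hi hmem, hu i hi t hmem]

/-- Cross inequality. -/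
lemma stepInt_le_stepInt (hβ : Monotone β) (hca : ∀ t, t ≤ a → β t = β a)
    (hcb : ∀ t, b ≤ t → β t = β b) {f u v : ℝ → ℝ} {P Q : RDSPartition a b}
    (hu : IsStepOn a b u P) (hv : IsStepOn a b v Q)
    (hfu : ∀ t ∈ Set.Icc a b, f t ≤ u t) (hvf : ∀ t ∈ Set.Icc a b, v t ≤ f t) :
    stepInt a b β Q v ≤ stepInt a b β P u := by
  have := F_finite hβ hca hcb
  rw [stepInt_eq_integral hβ hca hcb P u, stepInt_eq_integral hβ hca hcb Q v]
  apply integral_mono (Q.psum_integrable _ _ _) (P.psum_integrable _ _ _)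
  intro t
  by_cases ht : t ∈ Set.Icc a b
  · rw [psum_eq_self hu ht, psum_eq_self hv ht]
    exact le_trans (hvf t ht) (hfu t ht)
  · rw [P.psum_zero _ _ ht, Q.psum_zero _ _ ht]

end Meas

section Small

variable {a b : ℝ} {β : ℝ → ℝ}

/-- Extend a partition of `[a,y]` to a partition of `[a,c]` by adding the node `c`. -/
def RDSPartition.extend {a y : ℝ} (P : RDSPartition a y) {c : ℝ} (hyc : y < c) : RDSPartition a c where
  n := P.n + 1
  x := fun i => if i ≤ P.n then P.x i else c
  mono := by
    intro i hi
    show (if i ≤ P.n then P.x i else c) < (if i + 1 ≤ P.n then P.x (i + 1) else c)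
    rcases Nat.lt_succ_iff_lt_or_eq.1 hi with h | h
    · rw [if_pos h.le, if_pos (Nat.succ_le_of_lt h)]
      exact P.mono i h
    · subst h
      rw [if_pos le_rfl, if_neg (by omega)]
      exact P.last.trans_lt hyc
  first := by
    show (if 0 ≤ P.n then P.x 0 else c) = a
    rw [if_pos (Nat.zero_le _)]; exact P.first
  last := by
    show (if P.n + 1 ≤ P.n then P.x (P.n + 1) else c) = c
    rw [if_neg (by omega)]

lemma RDSPartition.extend_prop {a y c : ℝ} (P : RDSPartition a y) (hyc : y < c)
    {Q : ℝ → ℝ → Prop} (h : ∀ i < P.n, Q (P.x i) (P.x (i + 1))) (hQ : Q y c) :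
    ∀ i < (P.extend hyc).n, Q ((P.extend hyc).x i) ((P.extend hyc).x (i + 1)) := by
  intro i hi
  rcases Nat.lt_succ_iff_lt_or_eq.1 hi with h' | h'
  · show Q (if i ≤ P.n then P.x i else c) (if i + 1 ≤ P.n then P.x (i + 1) else c)
    rw [if_pos h'.le, if_pos (Nat.succ_le_of_lt h')]
    exact h i h'
  · subst h'
    show Q (if P.n ≤ P.n then P.x P.n else c) (if P.n + 1 ≤ P.n then P.x (P.n + 1) else c)
    rw [if_pos le_rfl, if_neg (by omega), P.last]
    exact hQ

lemma claim_left (hβ : Monotone β) {δ : ℝ} (hδ : 0 < δ) (c : ℝ) :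
    ∀ᶠ y in 𝓝[<] c, hβ.stieltjesFunction.measure (Set.Ioo y c) ≤ ENNReal.ofReal δ := by
  set F := hβ.stieltjesFunction
  have ht : Filter.Tendsto F (𝓝[<] c) (𝓝 (Function.leftLim F c)) := F.mono.tendsto_leftLim c
  filter_upwards [ht (Ioi_mem_nhds (show Function.leftLim F c - δ < Function.leftLim F c by
    linarith))] with y hy
  rw [F.measure_Ioo]
  exact ENNReal.ofReal_le_ofReal (by simp only [Set.mem_preimage, Set.mem_Ioi] at hy; linarith)

lemma claim_right (hβ : Monotone β) {δ : ℝ} (hδ : 0 < δ) (c : ℝ) :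
    ∀ᶠ y in 𝓝[>] c, hβ.stieltjesFunction.measure (Set.Ioo c y) ≤ ENNReal.ofReal δ := by
  set F := hβ.stieltjesFunction
  have ht : Filter.Tendsto F (𝓝[>] c) (𝓝 (F c)) :=
    (F.right_continuous c).mono_left (nhdsWithin_mono _ Set.Ioi_subset_Ici_self)
  filter_upwards [ht (Iio_mem_nhds (show F c < F c + δ by linarith))] with y hy
  rw [F.measure_Ioo]
  have h2 : Function.leftLim F y ≤ F y := F.mono.leftLim_le le_rfl
  exact ENNReal.ofReal_le_ofReal (by simp only [Set.mem_preimage, Set.mem_Iio] at hy; linarith)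

lemma exists_partition_small (hab : a < b) (hβ : Monotone β) {δ : ℝ} (hδ : 0 < δ) :
    ∃ P : RDSPartition a b, ∀ i < P.n,
      hβ.stieltjesFunction.measure (Set.Ioo (P.x i) (P.x (i + 1))) ≤ ENNReal.ofReal δ := by
  set μ := hβ.stieltjesFunction.measure
  set G : ℝ → Prop := fun y => ∃ P : RDSPartition a y, ∀ i < P.n,
    μ (Set.Ioo (P.x i) (P.x (i + 1))) ≤ ENNReal.ofReal δ with hG
  set S : Set ℝ := {y | y ∈ Set.Icc a b ∧ G y} with hS
  have hGa : G a := ⟨⟨0, fun _ => a, fun i hi => absurd hi (Nat.not_lt_zero i), rfl, rfl⟩,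
    fun i hi => absurd hi (Nat.not_lt_zero i)⟩
  have haS : a ∈ S := ⟨⟨le_rfl, hab.le⟩, hGa⟩
  have hbdd : BddAbove S := ⟨b, fun y hy => hy.1.2⟩
  set c := sSup S with hc
  have hcm : c ∈ Set.Icc a b := ⟨le_csSup hbdd haS, csSup_le ⟨a, haS⟩ fun y hy => hy.1.2⟩
  have hGc : G c := by
    rcases eq_or_lt_of_le hcm.1 with heq | hlt
    · exact heq ▸ hGa
    · obtain ⟨w, hw, hsub⟩ := mem_nhdsLT_iff_exists_Ioo_subset.1 (claim_left hβ hδ c)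
      have hw' : w ∈ Set.Iio c := hw
      have hwc : max w ((a + c) / 2) < c := max_lt hw' (by linarith)
      obtain ⟨y1, hy1S, hy1⟩ := exists_lt_of_lt_csSup ⟨a, haS⟩ hwc
      have hy1c : y1 ≤ c := le_csSup hbdd hy1S
      rcases eq_or_lt_of_le hy1c with heq1 | hlt1
      · exact heq1 ▸ hy1S.2
      · obtain ⟨P1, hP1⟩ := hy1S.2
        exact ⟨P1.extend hlt1, P1.extend_prop hlt1
          (Q := fun s t => μ (Set.Ioo s t) ≤ ENNReal.ofReal δ) hP1
          (hsub ⟨lt_of_le_of_lt (le_max_left _ _) hy1, hlt1⟩)⟩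
  rcases eq_or_lt_of_le hcm.2 with heq | hlt
  · exact heq ▸ hGc
  · exfalso
    obtain ⟨w, hw, hsub⟩ := mem_nhdsGT_iff_exists_Ioo_subset.1 (claim_right hβ hδ c)
    have hw' : w ∈ Set.Ioi c := hw
    have hy2c : c < min ((c + w) / 2) b := lt_min (by have := hw'.out; linarith) hlt
    have hy2w : min ((c + w) / 2) b < w :=
      lt_of_le_of_lt (min_le_left _ _) (by have := hw'.out; linarith)
    obtain ⟨Pc, hPc⟩ := hGc
    have hmem : min ((c + w) / 2) b ∈ S :=
      ⟨⟨le_trans hcm.1 hy2c.le, min_le_right _ _⟩,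
        ⟨Pc.extend hy2c, Pc.extend_prop hy2c
          (Q := fun s t => μ (Set.Ioo s t) ≤ ENNReal.ofReal δ) hPc (hsub ⟨hy2c, hy2w⟩)⟩⟩
    exact absurd (le_csSup hbdd hmem) (not_le.2 hy2c)

end Small

section Approx

variable {a b : ℝ} {β f : ℝ → ℝ}

lemma stepInt_psum (P : RDSPartition a b) (c d : ℕ → ℝ) :
    stepInt a b β P (P.psum c d) =
      (∑ i ∈ Finset.range (P.n + 1), c i * muPt a b β (P.x i)) +
        ∑ i ∈ Finset.range P.n, d i * muIoo a b β (P.x i) (P.x (i + 1)) := by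
  rw [stepInt]
  congr 1
  · exact Finset.sum_congr rfl fun i hi => by
      rw [P.psum_node c d (Nat.lt_succ_iff.1 (Finset.mem_range.1 hi))]
  · exact Finset.sum_congr rfl fun i hi => by
      rw [P.psum_Ioo c d (Finset.mem_range.1 hi) (P.mid_mem (Finset.mem_range.1 hi))]

lemma sum_eVariation (hab : a < b) (P : RDSPartition a b) :
    (∑ i ∈ Finset.range P.n,
        eVariationOn f (Set.Icc a b ∩ Set.Icc (P.x i) (P.x (i + 1)))) =
      eVariationOn f (Set.Icc a b) := by
  have key : ∀ k ≤ P.n, (∑ i ∈ Finset.range k,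
      eVariationOn f (Set.Icc a b ∩ Set.Icc (P.x i) (P.x (i + 1)))) =
      eVariationOn f (Set.Icc a b ∩ Set.Icc a (P.x k)) := by
    intro k hk
    induction k with
    | zero =>
      rw [Finset.sum_range_zero, P.first]
      refine (eVariationOn.subsingleton f fun s hs t ht => ?_).symm
      have hs' := hs.2; have ht' := ht.2
      rw [Set.mem_Icc] at hs' ht'
      linarith [hs'.1, hs'.2, ht'.1, ht'.2]
    | succ k ih =>
      rw [Finset.sum_range_succ, ih (le_trans (Nat.le_succ k) hk)]
      exact eVariationOn.Icc_add_Icc f (P.x_mem (le_trans (Nat.le_succ k) hk)).1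
        (P.mono k (Nat.lt_of_succ_le hk)).le
        (P.x_mem (le_trans (Nat.le_succ k) hk))
  have := key P.n le_rfl
  rwa [P.last, Set.inter_eq_self_of_subset_left (fun t ht => ht)] at this

lemma exists_approx (hab : a < b) (hβ : Monotone β)
    (hca : ∀ t, t ≤ a → β t = β a) (hcb : ∀ t, b ≤ t → β t = β b)
    (hf : BoundedVariationOn f (Set.Icc a b)) {ε : ℝ} (hε : 0 < ε) :
    ∃ (u v : ℝ → ℝ) (P : RDSPartition a b), IsStepOn a b u P ∧ IsStepOn a b v P ∧
      (∀ t ∈ Set.Icc a b, f t ≤ u t) ∧ (∀ t ∈ Set.Icc a b, v t ≤ f t) ∧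
      stepInt a b β P u ≤ stepInt a b β P v + ε := by
  set V := (eVariationOn f (Set.Icc a b)).toReal with hV
  have hV0 : 0 ≤ V := ENNReal.toReal_nonneg
  set δ := ε / (V + 1) with hδdef
  have hδ : 0 < δ := div_pos hε (by linarith)
  obtain ⟨P, hP⟩ := exists_partition_small hab hβ hδ
  have hbddA : BddAbove (f '' Set.Icc a b) := by
    refine ⟨f a + V, fun y hy => ?_⟩
    obtain ⟨t, ht, rfl⟩ := hy
    have := hf.sub_le ht (Set.left_mem_Icc.2 hab.le)
    linarith
  have hbddB : BddBelow (f '' Set.Icc a b) := by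
    refine ⟨f a - V, fun y hy => ?_⟩
    obtain ⟨t, ht, rfl⟩ := hy
    have := hf.sub_le (Set.left_mem_Icc.2 hab.le) ht
    linarith
  set Si : ℕ → ℝ := fun i => sSup (f '' Set.Ioo (P.x i) (P.x (i + 1))) with hSi
  set Ii : ℕ → ℝ := fun i => sInf (f '' Set.Ioo (P.x i) (P.x (i + 1))) with hIi
  have hne : ∀ i, i < P.n → (f '' Set.Ioo (P.x i) (P.x (i + 1))).Nonempty := fun i hi =>
    ⟨f ((P.x i + P.x (i + 1)) / 2), Set.mem_image_of_mem f (P.mid_mem hi)⟩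
  have hbA : ∀ i, i < P.n → BddAbove (f '' Set.Ioo (P.x i) (P.x (i + 1))) := fun i hi =>
    hbddA.mono (Set.image_mono (P.Ioo_subset hi))
  have hbB : ∀ i, i < P.n → BddBelow (f '' Set.Ioo (P.x i) (P.x (i + 1))) := fun i hi =>
    hbddB.mono (Set.image_mono (P.Ioo_subset hi))
  refine ⟨P.psum (fun i => f (P.x i)) Si, P.psum (fun i => f (P.x i)) Ii, P,
    P.isStepOn_psum _ _, P.isStepOn_psum _ _, ?_, ?_, ?_⟩
  · intro t ht
    rcases P.cover ht with ⟨i, hi, rfl⟩ | ⟨i, hi, hmem⟩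
    · rw [P.psum_node _ _ hi]
    · rw [P.psum_Ioo _ _ hi hmem]
      exact le_csSup (hbA i hi) (Set.mem_image_of_mem f hmem)
  · intro t ht
    rcases P.cover ht with ⟨i, hi, rfl⟩ | ⟨i, hi, hmem⟩
    · rw [P.psum_node _ _ hi]
    · rw [P.psum_Ioo _ _ hi hmem]
      exact csInf_le (hbB i hi) (Set.mem_image_of_mem f hmem)
  · rw [stepInt_psum, stepInt_psum]
    rw [add_assoc, add_le_add_iff_left]
    set m : ℕ → ℝ := fun i => muIoo a b β (P.x i) (P.x (i + 1)) with hm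
    set E : ℕ → ENNReal := fun i =>
      eVariationOn f (Set.Icc a b ∩ Set.Icc (P.x i) (P.x (i + 1))) with hE
    have hEne : ∀ i, E i ≠ ⊤ := fun i =>
      ne_top_of_le_ne_top hf (eVariationOn.mono f Set.inter_subset_left)
    have hm_nonneg : ∀ i, i < P.n → 0 ≤ m i := by
      intro i hi
      rw [hm]
      simp only
      rw [muIoo_eq hβ hca hcb (P.x_mem hi.le).1 (P.mono i hi)
        (P.x_mem (show i + 1 ≤ P.n from hi)).2]
      exact ENNReal.toReal_nonneg
    have hm_le : ∀ i, i < P.n → m i ≤ δ := by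
      intro i hi
      rw [hm]
      simp only
      rw [muIoo_eq hβ hca hcb (P.x_mem hi.le).1 (P.mono i hi)
        (P.x_mem (show i + 1 ≤ P.n from hi)).2]
      calc (hβ.stieltjesFunction.measure (Set.Ioo (P.x i) (P.x (i + 1)))).toReal
        ≤ (ENNReal.ofReal δ).toReal := ENNReal.toReal_mono ENNReal.ofReal_ne_top (hP i hi)
      _ = δ := ENNReal.toReal_ofReal hδ.le
    have hSIle : ∀ i, i < P.n → Ii i ≤ Si i := fun i hi =>
      le_trans (csInf_le (hbB i hi) (Set.mem_image_of_mem f (P.mid_mem hi)))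
        (le_csSup (hbA i hi) (Set.mem_image_of_mem f (P.mid_mem hi)))
    have hosc : ∀ i, i < P.n → Si i - Ii i ≤ (E i).toReal := by
      intro i hi
      have h1 : Si i ≤ Ii i + (E i).toReal := by
        apply csSup_le (hne i hi)
        rintro y ⟨s, hs, rfl⟩
        have h2 : f s - (E i).toReal ≤ Ii i := by
          apply le_csInf (hne i hi)
          rintro z ⟨t, ht, rfl⟩
          have h3 := (hf.mono Set.inter_subset_left).sub_le
            (x := s) (y := t) ⟨P.Ioo_subset hi hs, Set.Ioo_subset_Icc_self hs⟩
            ⟨P.Ioo_subset hi ht, Set.Ioo_subset_Icc_self ht⟩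
          have h3' : f s - f t ≤ (E i).toReal := h3
          linarith
        linarith
      linarith
    calc (∑ i ∈ Finset.range P.n, Si i * m i)
        ≤ ∑ i ∈ Finset.range P.n, (Ii i * m i + (Si i - Ii i) * δ) := by
          apply Finset.sum_le_sum
          intro i hi
          have hi' := Finset.mem_range.1 hi
          have := mul_le_mul_of_nonneg_left (hm_le i hi') (sub_nonneg.2 (hSIle i hi'))
          have h0 := mul_le_mul_of_nonneg_right (le_refl (Si i - Ii i)) (hm_nonneg i hi')
          nlinarith [hm_nonneg i hi', hm_le i hi', hSIle i hi']
      _ = (∑ i ∈ Finset.range P.n, Ii i * m i) +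
            (∑ i ∈ Finset.range P.n, (Si i - Ii i)) * δ := by
          rw [Finset.sum_add_distrib, Finset.sum_mul]
      _ ≤ (∑ i ∈ Finset.range P.n, Ii i * m i) + ε := by
          rw [add_le_add_iff_left]
          have h4 : (∑ i ∈ Finset.range P.n, (Si i - Ii i)) ≤ V := by
            calc (∑ i ∈ Finset.range P.n, (Si i - Ii i))
                ≤ ∑ i ∈ Finset.range P.n, (E i).toReal :=
                  Finset.sum_le_sum fun i hi => hosc i (Finset.mem_range.1 hi)
              _ = (∑ i ∈ Finset.range P.n, E i).toReal :=
                  (ENNReal.toReal_sum fun i _ => hEne i).symm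
              _ = V := by rw [hE, hV, sum_eVariation hab]
          have h5 : 0 ≤ ∑ i ∈ Finset.range P.n, (Si i - Ii i) :=
            Finset.sum_nonneg fun i hi => sub_nonneg.2 (hSIle i (Finset.mem_range.1 hi))
          calc (∑ i ∈ Finset.range P.n, (Si i - Ii i)) * δ
              ≤ V * δ := mul_le_mul_of_nonneg_right h4 hδ.le
            _ ≤ ε := by
                rw [hδdef, mul_div_assoc']
                rw [div_le_iff₀ (by linarith : (0:ℝ) < V + 1)]
                nlinarith
end Approx

section MainInc

variable {a b : ℝ} {β f : ℝ → ℝ}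

lemma mainInc (hab : a < b) (hβ : Monotone β)
    (hca : ∀ t, t ≤ a → β t = β a) (hcb : ∀ t, b ≤ t → β t = β b)
    (hf : BoundedVariationOn f (Set.Icc a b)) : RDSIntegrableInc a b β f := by
  set V := (eVariationOn f (Set.Icc a b)).toReal with hV
  set M := |f a| + V with hM
  have hMb : ∀ t ∈ Set.Icc a b, |f t| ≤ M := by
    intro t ht
    have h1 := hf.dist_le ht (Set.left_mem_Icc.2 hab.le)
    rw [Real.dist_eq] at h1
    calc |f t| = |f t - f a + f a| := by ring_nf
      _ ≤ |f t - f a| + |f a| := abs_add_le _ _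
      _ ≤ M := by rw [hM]; linarith
  set P0 : RDSPartition a b := ⟨1, fun i => if i = 0 then a else b, by
    intro i hi
    interval_cases i
    simpa using hab, by simp, by simp⟩ with hP0
  have hconst : ∀ (r : ℝ) (P : RDSPartition a b), IsStepOn a b (fun _ => r) P :=
    fun r P i hi s hs => rfl
  set L := { r | ∃ (v : ℝ → ℝ) (P : RDSPartition a b), IsStepOn a b v P ∧
    (∀ t ∈ Set.Icc a b, v t ≤ f t) ∧ r = stepInt a b β P v } with hL
  set U := { r | ∃ (u : ℝ → ℝ) (P : RDSPartition a b), IsStepOn a b u P ∧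
    (∀ t ∈ Set.Icc a b, f t ≤ u t) ∧ r = stepInt a b β P u } with hU
  have hLne : L.Nonempty := ⟨stepInt a b β P0 (fun _ => -M), ⟨fun _ => -M, P0, hconst _ _,
    fun t ht => neg_le_of_abs_le (hMb t ht) |>.trans_eq' rfl, rfl⟩⟩
  have hUne : U.Nonempty := ⟨stepInt a b β P0 (fun _ => M), ⟨fun _ => M, P0, hconst _ _,
    fun t ht => le_of_abs_le (hMb t ht), rfl⟩⟩
  have hcross : ∀ l ∈ L, ∀ u ∈ U, l ≤ u := by
    rintro l ⟨v, Q, hv, hvf, rfl⟩ u ⟨w, P, hw, hfw, rfl⟩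
    exact stepInt_le_stepInt hβ hca hcb hw hv hfw hvf
  obtain ⟨u0, hu0⟩ := hUne
  obtain ⟨l0, hl0⟩ := hLne
  have hbddA : BddAbove L := ⟨u0, fun l hl => hcross l hl u0 hu0⟩
  have hbddB : BddBelow U := ⟨l0, fun u hu => hcross l0 hl0 u hu⟩
  rw [RDSIntegrableInc, lowerRDS, upperRDS]
  refine le_antisymm ?_ ?_
  · exact csSup_le ⟨l0, hl0⟩ fun l hl => le_csInf ⟨u0, hu0⟩ fun u hu => hcross l hl u hu
  · apply le_of_forall_pos_le_add
    intro ε hε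
    obtain ⟨u, v, P, hsu, hsv, hfu, hvf, happ⟩ := exists_approx hab hβ hca hcb hf hε
    calc sInf U ≤ stepInt a b β P u := csInf_le hbddB ⟨u, P, hsu, hfu, rfl⟩
      _ ≤ stepInt a b β P v + ε := happ
      _ ≤ sSup L + ε := add_le_add_left (le_csSup hbddA ⟨v, P, hsv, hvf, rfl⟩) ε

end MainInc

end RDSProof


theorem stmt16 (a b : ℝ) (hab : a < b) (α f : ℝ → ℝ)
    (hf : BoundedVariationOn f (Set.Icc a b))
    (hα : BoundedVariationOn α (Set.Icc a b)) :
    RDSIntegrable a b α f := by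
  have hloc := hα.locallyBoundedVariationOn
  have haI : a ∈ Set.Icc a b := Set.left_mem_Icc.2 hab.le
  set cl : ℝ → ℝ := fun t => max a (min b t) with hcl
  have hclmem : ∀ t, cl t ∈ Set.Icc a b := fun t =>
    ⟨le_max_left _ _, max_le hab.le (min_le_left _ _)⟩
  have hclmono : Monotone cl := fun s t hst =>
    max_le_max le_rfl (min_le_min le_rfl hst)
  have hcleq : ∀ t ∈ Set.Icc a b, cl t = t := by
    intro t ht
    rw [hcl]
    simp only
    rw [min_eq_right ht.2, max_eq_right ht.1]
  have hcla : ∀ t, t ≤ a → cl t = a := by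
    intro t ht
    rw [hcl]
    simp only
    rw [min_eq_right (le_trans ht hab.le), max_eq_left ht]
  have hclb : ∀ t, b ≤ t → cl t = b := by
    intro t ht
    rw [hcl]
    simp only
    rw [min_eq_left ht, max_eq_right hab.le]
  have hmonoP := variationOnFromTo.monotoneOn hloc haI
  have hmonoQ := variationOnFromTo.sub_self_monotoneOn hloc haI
  set p : ℝ → ℝ := fun t => variationOnFromTo α (Set.Icc a b) a (cl t) with hp
  set q : ℝ → ℝ := fun t => p t - α (cl t) with hq
  have hpm : Monotone p := fun s t hst => hmonoP (hclmem s) (hclmem t) (hclmono hst)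
  have hqm : Monotone q := fun s t hst => hmonoQ (hclmem s) (hclmem t) (hclmono hst)
  have hpca : ∀ t, t ≤ a → p t = p a := by
    intro t ht
    rw [hp]
    simp only
    rw [hcla t ht, hcla a le_rfl]
  have hpcb : ∀ t, b ≤ t → p t = p b := by
    intro t ht
    rw [hp]
    simp only
    rw [hclb t ht, hclb b le_rfl]
  have hqca : ∀ t, t ≤ a → q t = q a := by
    intro t ht
    rw [hq]
    simp only
    rw [hpca t ht, hcla t ht, hcla a le_rfl, hpca a le_rfl]
  have hqcb : ∀ t, b ≤ t → q t = q b := by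
    intro t ht
    rw [hq]
    simp only
    rw [hpcb t ht, hclb t ht, hclb b le_rfl, hpcb b le_rfl]
  refine ⟨p, q, hpm.monotoneOn _, hqm.monotoneOn _, ?_, ?_, ?_⟩
  · intro t ht
    rw [hq]
    simp only
    rw [hcleq t ht]
    ring
  · exact mainInc hab hpm hpca hpcb hf
  · exact mainInc hab hqm hqca hqcb hf
end

section
/- Point-mass behavior: if α(x) = H_c(x - x₀) for some x₀ ∈ (a,b) and c ∈ ℝ (Heaviside function jump at x₀), then every bounded f on [a,b] is RDS integrable with respect to α and ∫_a^b f dα = f(x₀). -/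
open Set Filter Topology
open scoped Classical

/-- The Heaviside function `H_c`: `0` for `x < 0`, `c` at `x = 0`, `1` for `x > 0`. -/
noncomputable def Heav (c : ℝ) (x : ℝ) : ℝ := if x < 0 then 0 else if x = 0 then c else 1

section Aux

variable {a b x₀ p q : ℝ}

/-- Two-jump function: `0` below `x₀`, `p` at `x₀`, `q` above `x₀`. -/
noncomputable def Jmp (x₀ p q : ℝ) (t : ℝ) : ℝ :=
  if t < x₀ then 0 else if t = x₀ then p else q

lemma Heav_eq_Jmp (c x₀ t : ℝ) : Heav c (t - x₀) = Jmp x₀ c 1 t := by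
  simp only [Heav, Jmp, sub_neg, sub_eq_zero]

lemma Jmp_of_lt {t : ℝ} (h : t < x₀) : Jmp x₀ p q t = 0 := if_pos h

lemma Jmp_of_gt {t : ℝ} (h : x₀ < t) : Jmp x₀ p q t = q := by
  rw [Jmp, if_neg (not_lt.2 h.le), if_neg h.ne']

lemma Jmp_self : Jmp x₀ p q x₀ = p := by
  rw [Jmp, if_neg (lt_irrefl x₀), if_pos rfl]

lemma Jmp_nonneg (hp : 0 ≤ p) (hq : 0 ≤ q) (t : ℝ) : 0 ≤ Jmp x₀ p q t := by
  rw [Jmp]; split_ifs <;> first | rfl | assumption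

lemma Jmp_le (hp : p ≤ q) (hq : 0 ≤ q) (t : ℝ) : Jmp x₀ p q t ≤ q := by
  rw [Jmp]; split_ifs <;> first | rfl | assumption

lemma Jmp_monotone (hp : 0 ≤ p) (hpq : p ≤ q) : Monotone (Jmp x₀ p q) := by
  intro s t hst
  rcases lt_trichotomy s x₀ with hs | hs | hs
  · rw [Jmp_of_lt hs]
    exact Jmp_nonneg hp (hp.trans hpq) t
  · subst hs
    rw [Jmp_self]
    rcases eq_or_lt_of_le hst with rfl | h
    · rw [Jmp_self]
    · rw [Jmp_of_gt h]; exact hpq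
  · rw [Jmp_of_gt hs, Jmp_of_gt (hs.trans_le hst)]

lemma Jmp_tendsto_right (x₀ p q t : ℝ) :
    Tendsto (Jmp x₀ p q) (𝓝[>] t) (𝓝 (if t < x₀ then 0 else q)) := by
  rcases lt_or_ge t x₀ with h | h
  · rw [if_pos h]
    refine Tendsto.congr' ?_ tendsto_const_nhds
    filter_upwards [Ioo_mem_nhdsGT_of_mem ⟨le_refl t, h⟩] with s hs
    exact (Jmp_of_lt hs.2).symm
  · rw [if_neg (not_lt.2 h)]
    refine Tendsto.congr' ?_ tendsto_const_nhds
    filter_upwards [Ioo_mem_nhdsGT_of_mem ⟨le_refl t, lt_add_one t⟩] with s hs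
    exact (Jmp_of_gt (h.trans_lt hs.1)).symm

lemma Jmp_tendsto_left (x₀ p q t : ℝ) :
    Tendsto (Jmp x₀ p q) (𝓝[<] t) (𝓝 (if x₀ < t then q else 0)) := by
  rcases lt_or_ge x₀ t with h | h
  · rw [if_pos h]
    refine Tendsto.congr' ?_ tendsto_const_nhds
    filter_upwards [Ioo_mem_nhdsLT_of_mem ⟨h, le_refl t⟩] with s hs
    exact (Jmp_of_gt hs.1).symm
  · rw [if_neg (not_lt.2 h)]
    refine Tendsto.congr' ?_ tendsto_const_nhds
    filter_upwards [Ioo_mem_nhdsLT_of_mem ⟨sub_one_lt t, le_refl t⟩] with s hs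
    exact (Jmp_of_lt (hs.2.trans_le h)).symm

lemma rLim_Jmp (hb : x₀ < b) (p q : ℝ) {t : ℝ} (ht : t ≤ b) :
    rLim b (Jmp x₀ p q) t = if t < x₀ then 0 else q := by
  rcases lt_or_eq_of_le ht with h | rfl
  · rw [rLim, if_pos h]
    exact rightLim_eq_of_tendsto (Jmp_tendsto_right x₀ p q t)
  · rw [rLim, if_neg (lt_irrefl _), Jmp_of_gt hb, if_neg (not_lt.2 hb.le)]

lemma lLim_Jmp (ha : a < x₀) (p q : ℝ) {t : ℝ} (ht : a ≤ t) :
    lLim a (Jmp x₀ p q) t = if x₀ < t then q else 0 := by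
  rcases lt_or_eq_of_le ht with h | rfl
  · rw [lLim, if_pos h]
    exact leftLim_eq_of_tendsto (Jmp_tendsto_left x₀ p q t)
  · rw [lLim, if_neg (lt_irrefl _), Jmp_of_lt ha, if_neg (not_lt.2 ha.le)]

lemma muPt_Jmp (ha : a < x₀) (hb : x₀ < b) (p q : ℝ) {t : ℝ} (ht : t ∈ Set.Icc a b) :
    muPt a b (Jmp x₀ p q) t = if t = x₀ then q else 0 := by
  rw [muPt, rLim_Jmp hb p q ht.2, lLim_Jmp ha p q ht.1]
  rcases lt_trichotomy t x₀ with h | h | h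
  · rw [if_pos h, if_neg (not_lt.2 h.le), if_neg h.ne, sub_zero]
  · subst h
    rw [if_neg (lt_irrefl t), if_neg (lt_irrefl t), if_pos rfl, sub_zero]
  · rw [if_neg (not_lt.2 h.le), if_pos h, if_neg h.ne', sub_self]

lemma muIoo_Jmp (ha : a < x₀) (hb : x₀ < b) (p q : ℝ) {s t : ℝ} (hs : a ≤ s) (hst : s < t)
    (ht : t ≤ b) :
    muIoo a b (Jmp x₀ p q) s t = if s < x₀ ∧ x₀ < t then q else 0 := by
  rw [muIoo, lLim_Jmp ha p q (hs.trans hst.le), rLim_Jmp hb p q (hst.le.trans ht)]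
  rcases lt_or_ge s x₀ with h | h
  · rw [if_pos h]
    rcases lt_or_ge x₀ t with h' | h'
    · rw [if_pos h', if_pos ⟨h, h'⟩, sub_zero]
    · have h1 : ¬(s < x₀ ∧ x₀ < t) := fun hc => absurd hc.2 (not_lt.2 h')
      rw [if_neg (not_lt.2 h'), if_neg h1, sub_zero]
  · have h1 : ¬(s < x₀ ∧ x₀ < t) := fun hc => absurd hc.1 (not_lt.2 h)
    rw [if_neg (not_lt.2 h), if_pos (h.trans_lt hst), if_neg h1, sub_self]

end Aux
section Aux2

variable {a b x₀ p q : ℝ}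

lemma RDSPartition.x_lt_s17 (P : RDSPartition a b) : ∀ {i j : ℕ}, i < j → j ≤ P.n → P.x i < P.x j := by
  intro i j hij hj
  induction j with
  | zero => omega
  | succ k ih =>
    rcases Nat.lt_succ_iff_lt_or_eq.mp hij with h | h
    · exact (ih h (by omega)).trans (P.mono k (by omega))
    · subst h; exact P.mono i (by omega)

lemma RDSPartition.x_le (P : RDSPartition a b) {i j : ℕ} (hij : i ≤ j) (hj : j ≤ P.n) :
    P.x i ≤ P.x j := by
  rcases eq_or_lt_of_le hij with rfl | h
  · exact le_rfl
  · exact (P.x_lt_s17 h hj).le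

lemma RDSPartition.x_mem_s17 (P : RDSPartition a b) {i : ℕ} (hi : i ≤ P.n) : P.x i ∈ Set.Icc a b := by
  constructor
  · have h := P.x_le (Nat.zero_le i) hi
    rwa [P.first] at h
  · have h := P.x_le hi le_rfl
    rwa [P.last] at h

lemma RDSPartition.lt_of_x_lt (P : RDSPartition a b) {i j : ℕ} (hi : i ≤ P.n) (hj : j ≤ P.n)
    (h : P.x i < P.x j) : i < j := by
  by_contra hc
  exact absurd (P.x_le (not_lt.1 hc) hi) (not_le.2 h)

/-- Key computation: the `Jmp` step integral of any step function is `q * u x₀`. -/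
lemma stepInt_Jmp (ha : a < x₀) (hb : x₀ < b) (p q : ℝ) (P : RDSPartition a b) (u : ℝ → ℝ)
    (hu : IsStepOn a b u P) : stepInt a b (Jmp x₀ p q) P u = q * u x₀ := by
  rw [stepInt]
  have hmem : ∀ i ∈ Finset.range (P.n + 1), P.x i ∈ Set.Icc a b := fun i hi =>
    P.x_mem_s17 (Nat.lt_succ_iff.1 (Finset.mem_range.1 hi))
  have h1 : ∀ i ∈ Finset.range (P.n + 1),
      u (P.x i) * muPt a b (Jmp x₀ p q) (P.x i)
        = u (P.x i) * (if P.x i = x₀ then q else 0) := fun i hi => by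
    rw [muPt_Jmp ha hb p q (hmem i hi)]
  have h2 : ∀ i ∈ Finset.range P.n,
      u ((P.x i + P.x (i + 1)) / 2) * muIoo a b (Jmp x₀ p q) (P.x i) (P.x (i + 1))
        = u ((P.x i + P.x (i + 1)) / 2) * (if P.x i < x₀ ∧ x₀ < P.x (i + 1) then q else 0) :=
    fun i hi => by
      have hi' : i < P.n := Finset.mem_range.1 hi
      rw [muIoo_Jmp ha hb p q (P.x_mem_s17 (by omega : i ≤ P.n)).1 (P.mono i hi')
        (P.x_mem_s17 (by omega : i + 1 ≤ P.n)).2]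
  rw [Finset.sum_congr rfl h1, Finset.sum_congr rfl h2]
  by_cases hex : ∃ k, k ≤ P.n ∧ P.x k = x₀
  · obtain ⟨k, hk, hxk⟩ := hex
    have hsum1 : (∑ i ∈ Finset.range (P.n + 1),
        u (P.x i) * (if P.x i = x₀ then q else 0)) = u x₀ * q := by
      rw [Finset.sum_eq_single_of_mem k (Finset.mem_range.2 (by omega))]
      · rw [if_pos hxk, hxk]
      · intro i hi hik
        have hi' : i ≤ P.n := by have := Finset.mem_range.1 hi; omega
        have hne : P.x i ≠ x₀ := by
          intro h
          have hkx : P.x i = P.x k := by rw [h, hxk]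
          rcases lt_or_gt_of_ne hik with h' | h'
          · exact absurd hkx (ne_of_lt (P.x_lt_s17 h' hk))
          · exact absurd hkx.symm (ne_of_lt (P.x_lt_s17 h' hi'))
        rw [if_neg hne, mul_zero]
    have hsum2 : (∑ i ∈ Finset.range P.n,
        u ((P.x i + P.x (i + 1)) / 2) * (if P.x i < x₀ ∧ x₀ < P.x (i + 1) then q else 0)) = 0 := by
      apply Finset.sum_eq_zero
      intro i hi
      have hi' : i < P.n := Finset.mem_range.1 hi
      have : ¬(P.x i < x₀ ∧ x₀ < P.x (i + 1)) := by
        rintro ⟨hA, hB⟩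
        rw [← hxk] at hA hB
        have h1 : i < k := P.lt_of_x_lt (by omega) hk hA
        have h2 : k < i + 1 := P.lt_of_x_lt hk (by omega) hB
        omega
      rw [if_neg this, mul_zero]
    rw [hsum1, hsum2, add_zero, mul_comm]
  · push_neg at hex
    have hsum1 : (∑ i ∈ Finset.range (P.n + 1),
        u (P.x i) * (if P.x i = x₀ then q else 0)) = 0 := by
      apply Finset.sum_eq_zero
      intro i hi
      rw [if_neg (hex i (by have := Finset.mem_range.1 hi; omega)), mul_zero]
    -- find the interval containing x₀
    have h0S : (0 : ℕ) ∈ (Finset.range (P.n + 1)).filter (fun i => P.x i < x₀) :=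
      Finset.mem_filter.2 ⟨Finset.mem_range.2 (by omega), by rw [P.first]; exact ha⟩
    set S := (Finset.range (P.n + 1)).filter (fun i => P.x i < x₀) with hS
    set k := S.max' ⟨0, h0S⟩ with hkdef
    have hkS : k ∈ S := S.max'_mem ⟨0, h0S⟩
    have hk_le : k ≤ P.n := by
      have := Finset.mem_range.1 (Finset.mem_filter.1 hkS).1; omega
    have hk_lt : P.x k < x₀ := (Finset.mem_filter.1 hkS).2
    have hkn : k < P.n := by
      rcases eq_or_lt_of_le hk_le with h | h
      · rw [h, P.last] at hk_lt
        exact absurd hk_lt (not_lt.2 hb.le)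
      · exact h
    have hk1 : x₀ < P.x (k + 1) := by
      rcases lt_trichotomy (P.x (k + 1)) x₀ with h | h | h
      · have : k + 1 ∈ S := Finset.mem_filter.2 ⟨Finset.mem_range.2 (by omega), h⟩
        have := S.le_max' _ this
        omega
      · exact absurd h (hex (k + 1) (by omega))
      · exact h
    have hsum2 : (∑ i ∈ Finset.range P.n,
        u ((P.x i + P.x (i + 1)) / 2) * (if P.x i < x₀ ∧ x₀ < P.x (i + 1) then q else 0))
        = u x₀ * q := by
      rw [Finset.sum_eq_single_of_mem k (Finset.mem_range.2 hkn)]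
      · rw [if_pos ⟨hk_lt, hk1⟩, ← hu k hkn x₀ ⟨hk_lt, hk1⟩]
      · intro i hi hik
        have hi' : i < P.n := Finset.mem_range.1 hi
        have : ¬(P.x i < x₀ ∧ x₀ < P.x (i + 1)) := by
          rintro ⟨hA, hB⟩
          have hiS : i ∈ S := Finset.mem_filter.2 ⟨Finset.mem_range.2 (by omega), hA⟩
          have hik' : i < k := by
            have hle : i ≤ k := S.le_max' _ hiS
            omega
          have : P.x (i + 1) ≤ P.x k := P.x_le (by omega) hk_le
          linarith
        rw [if_neg this, mul_zero]
    rw [hsum1, hsum2, zero_add, mul_comm]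

end Aux2
section Aux3

variable {a b x₀ : ℝ} {g : ℝ → ℝ}

lemma mono_tendsto_right (hg : MonotoneOn g (Set.Icc a b)) {t : ℝ} (hat : a ≤ t) (htb : t < b) :
    Tendsto g (𝓝[>] t) (𝓝 (Function.rightLim g t)) := by
  have hsub : Set.Ioo t b ⊆ Set.Icc a b := fun s hs => ⟨hat.trans hs.1.le, hs.2.le⟩
  have hne : (Set.Ioo t b).Nonempty := Set.nonempty_Ioo.2 htb
  have hbdd : BddBelow (g '' Set.Ioo t b) := by
    refine ⟨g a, ?_⟩
    rintro y ⟨s, hs, rfl⟩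
    exact hg ⟨le_rfl, hat.trans htb.le⟩ (hsub hs) (hat.trans hs.1.le)
  have h := MonotoneOn.tendsto_nhdsWithin_Ioo_right hne (hg.mono hsub) hbdd
  rwa [rightLim_eq_of_tendsto h]

lemma mono_tendsto_left (hg : MonotoneOn g (Set.Icc a b)) {t : ℝ} (hat : a < t) (htb : t ≤ b) :
    Tendsto g (𝓝[<] t) (𝓝 (Function.leftLim g t)) := by
  have hsub : Set.Ioo a t ⊆ Set.Icc a b := fun s hs => ⟨hs.1.le, hs.2.le.trans htb⟩
  have hne : (Set.Ioo a t).Nonempty := Set.nonempty_Ioo.2 hat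
  have hbdd : BddAbove (g '' Set.Ioo a t) := by
    refine ⟨g b, ?_⟩
    rintro y ⟨s, hs, rfl⟩
    exact hg (hsub hs) ⟨hat.le.trans htb, le_rfl⟩ (hs.2.le.trans htb)
  have h := MonotoneOn.tendsto_nhdsWithin_Ioo_left hne (hg.mono hsub) hbdd
  rwa [leftLim_eq_of_tendsto h]

lemma le_rLim (hg : MonotoneOn g (Set.Icc a b)) {t : ℝ} (ht : t ∈ Set.Icc a b) :
    g t ≤ rLim b g t := by
  rcases lt_or_eq_of_le ht.2 with h | h
  · rw [rLim, if_pos h]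
    refine ge_of_tendsto (mono_tendsto_right hg ht.1 h) ?_
    filter_upwards [Ioo_mem_nhdsGT_of_mem ⟨le_refl t, h⟩] with s hs
    exact hg ht ⟨ht.1.trans hs.1.le, hs.2.le⟩ hs.1.le
  · rw [rLim, if_neg (by rw [h]; exact lt_irrefl b)]

lemma lLim_le (hg : MonotoneOn g (Set.Icc a b)) {t : ℝ} (ht : t ∈ Set.Icc a b) :
    lLim a g t ≤ g t := by
  rcases lt_or_eq_of_le ht.1 with h | h
  · rw [lLim, if_pos h]
    refine le_of_tendsto (mono_tendsto_left hg h ht.2) ?_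
    filter_upwards [Ioo_mem_nhdsLT_of_mem ⟨h, le_refl t⟩] with s hs
    exact hg ⟨hs.1.le, hs.2.le.trans ht.2⟩ ht hs.2.le
  · rw [lLim, if_neg (by rw [← h]; exact lt_irrefl a)]

lemma rLim_le (hg : MonotoneOn g (Set.Icc a b)) {s t : ℝ} (hs : a ≤ s) (hst : s < t)
    (ht : t ≤ b) : rLim b g s ≤ g t := by
  rw [rLim, if_pos (hst.trans_le ht)]
  refine le_of_tendsto (mono_tendsto_right hg hs (hst.trans_le ht)) ?_
  filter_upwards [Ioo_mem_nhdsGT_of_mem ⟨le_refl s, hst⟩] with w hw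
  exact hg ⟨hs.trans hw.1.le, hw.2.le.trans ht⟩ ⟨hs.trans hst.le, ht⟩ hw.2.le

lemma le_lLim (hg : MonotoneOn g (Set.Icc a b)) {s t : ℝ} (hs : a ≤ s) (hst : s < t)
    (ht : t ≤ b) : g s ≤ lLim a g t := by
  rw [lLim, if_pos (hs.trans_lt hst)]
  refine ge_of_tendsto (mono_tendsto_left hg (hs.trans_lt hst) ht) ?_
  filter_upwards [Ioo_mem_nhdsLT_of_mem ⟨hst, le_refl t⟩] with w hw
  exact hg ⟨hs, hst.le.trans ht⟩ ⟨hs.trans hw.1.le, hw.2.le.trans ht⟩ hw.1.le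

lemma muPt_nonneg (hg : MonotoneOn g (Set.Icc a b)) {t : ℝ} (ht : t ∈ Set.Icc a b) :
    0 ≤ muPt a b g t :=
  sub_nonneg.2 ((lLim_le hg ht).trans (le_rLim hg ht))

lemma muIoo_nonneg (hg : MonotoneOn g (Set.Icc a b)) {s t : ℝ} (hs : a ≤ s) (hst : s < t)
    (ht : t ≤ b) : 0 ≤ muIoo a b g s t := by
  have hm : (s + t) / 2 ∈ Set.Ioo s t := ⟨by linarith, by linarith⟩
  have h1 : rLim b g s ≤ g ((s + t) / 2) := rLim_le hg hs hm.1 (hm.2.le.trans ht)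
  have h2 : g ((s + t) / 2) ≤ lLim a g t := le_lLim hg (hs.trans hm.1.le) hm.2 ht
  exact sub_nonneg.2 (h1.trans h2)

/-- Telescoping: total mass of a partition equals `g b - g a`. -/
lemma mass_total (g : ℝ → ℝ) (P : RDSPartition a b) :
    (∑ i ∈ Finset.range (P.n + 1), muPt a b g (P.x i)) +
      ∑ i ∈ Finset.range P.n, muIoo a b g (P.x i) (P.x (i + 1)) = g b - g a := by
  rw [Finset.sum_range_succ]
  have key : (∑ i ∈ Finset.range P.n, muPt a b g (P.x i)) +
      (∑ i ∈ Finset.range P.n, muIoo a b g (P.x i) (P.x (i + 1)))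
      = ∑ i ∈ Finset.range P.n, (lLim a g (P.x (i + 1)) - lLim a g (P.x i)) := by
    rw [← Finset.sum_add_distrib]
    refine Finset.sum_congr rfl fun i _ => ?_
    rw [muPt, muIoo]; ring
  have htel : ∑ i ∈ Finset.range P.n, (lLim a g (P.x (i + 1)) - lLim a g (P.x i))
      = lLim a g (P.x P.n) - lLim a g (P.x 0) :=
    Finset.sum_range_sub (fun i => lLim a g (P.x i)) P.n
  have hb : rLim b g (P.x P.n) = g b := by rw [P.last, rLim, if_neg (lt_irrefl b)]
  have ha : lLim a g (P.x 0) = g a := by rw [P.first, lLim, if_neg (lt_irrefl a)]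
  have : (∑ i ∈ Finset.range P.n, muPt a b g (P.x i)) + muPt a b g (P.x P.n) +
      ∑ i ∈ Finset.range P.n, muIoo a b g (P.x i) (P.x (i + 1))
      = (lLim a g (P.x P.n) - lLim a g (P.x 0)) + muPt a b g (P.x P.n) := by
    rw [← htel, ← key]; ring
  rw [this, muPt, hb, ha]
  ring

end Aux3
section Aux4

variable {a b x₀ : ℝ} {g : ℝ → ℝ}

lemma rLim_decomp {A B : ℝ → ℝ} {cc : ℝ} (hB : MonotoneOn B (Set.Icc a b))
    (heq : ∀ t ∈ Set.Icc a b, A t = Jmp x₀ cc 1 t + B t) {t : ℝ} (ht : t ∈ Set.Icc a b) :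
    rLim b A t = rLim b (Jmp x₀ cc 1) t + rLim b B t := by
  rcases lt_or_eq_of_le ht.2 with h | h
  · have hJ : Tendsto (Jmp x₀ cc 1) (𝓝[>] t) (𝓝 (if t < x₀ then 0 else 1)) :=
      Jmp_tendsto_right x₀ cc 1 t
    have hBt := mono_tendsto_right hB ht.1 h
    have hA : Tendsto A (𝓝[>] t) (𝓝 ((if t < x₀ then 0 else 1) + Function.rightLim B t)) := by
      refine Tendsto.congr' ?_ (hJ.add hBt)
      filter_upwards [Ioo_mem_nhdsGT_of_mem ⟨le_refl t, h⟩] with s hs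
      exact (heq s ⟨ht.1.trans hs.1.le, hs.2.le⟩).symm
    rw [rLim, rLim, rLim, if_pos h, if_pos h, if_pos h,
      rightLim_eq_of_tendsto hA,
      rightLim_eq_of_tendsto hJ]
  · rw [rLim, rLim, rLim, if_neg (by rw [h]; exact lt_irrefl b),
      if_neg (by rw [h]; exact lt_irrefl b), if_neg (by rw [h]; exact lt_irrefl b)]
    exact heq t ht

lemma lLim_decomp {A B : ℝ → ℝ} {cc : ℝ} (hB : MonotoneOn B (Set.Icc a b))
    (heq : ∀ t ∈ Set.Icc a b, A t = Jmp x₀ cc 1 t + B t) {t : ℝ} (ht : t ∈ Set.Icc a b) :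
    lLim a A t = lLim a (Jmp x₀ cc 1) t + lLim a B t := by
  rcases lt_or_eq_of_le ht.1 with h | h
  · have hJ : Tendsto (Jmp x₀ cc 1) (𝓝[<] t) (𝓝 (if x₀ < t then 1 else 0)) :=
      Jmp_tendsto_left x₀ cc 1 t
    have hBt := mono_tendsto_left hB h ht.2
    have hA : Tendsto A (𝓝[<] t) (𝓝 ((if x₀ < t then 1 else 0) + Function.leftLim B t)) := by
      refine Tendsto.congr' ?_ (hJ.add hBt)
      filter_upwards [Ioo_mem_nhdsLT_of_mem ⟨h, le_refl t⟩] with s hs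
      exact (heq s ⟨hs.1.le, hs.2.le.trans ht.2⟩).symm
    rw [lLim, lLim, lLim, if_pos h, if_pos h, if_pos h,
      leftLim_eq_of_tendsto hA,
      leftLim_eq_of_tendsto hJ]
  · rw [lLim, lLim, lLim, if_neg (by rw [← h]; exact lt_irrefl a),
      if_neg (by rw [← h]; exact lt_irrefl a), if_neg (by rw [← h]; exact lt_irrefl a)]
    exact heq t ht

lemma stepInt_decomp (ha : a < x₀) (hb : x₀ < b) {A B : ℝ → ℝ} {cc : ℝ}
    (hB : MonotoneOn B (Set.Icc a b))
    (heq : ∀ t ∈ Set.Icc a b, A t = Jmp x₀ cc 1 t + B t)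
    (P : RDSPartition a b) (u : ℝ → ℝ) (hu : IsStepOn a b u P) :
    stepInt a b A P u = u x₀ + stepInt a b B P u := by
  have hJ : stepInt a b (Jmp x₀ cc 1) P u = 1 * u x₀ := stepInt_Jmp ha hb cc 1 P u hu
  have hmu : ∀ t ∈ Set.Icc a b,
      muPt a b A t = muPt a b (Jmp x₀ cc 1) t + muPt a b B t := fun t ht => by
    rw [muPt, muPt, muPt, rLim_decomp hB heq ht, lLim_decomp hB heq ht]; ring
  have hIoo : ∀ i, i < P.n → muIoo a b A (P.x i) (P.x (i + 1))
      = muIoo a b (Jmp x₀ cc 1) (P.x i) (P.x (i + 1)) + muIoo a b B (P.x i) (P.x (i + 1)) := by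
    intro i hi
    rw [muIoo, muIoo, muIoo, rLim_decomp hB heq (P.x_mem_s17 (by omega : i ≤ P.n)),
      lLim_decomp hB heq (P.x_mem_s17 (by omega : i + 1 ≤ P.n))]
    ring
  simp only [stepInt] at hJ ⊢
  have e1 : ∑ i ∈ Finset.range (P.n + 1), u (P.x i) * muPt a b A (P.x i)
      = (∑ i ∈ Finset.range (P.n + 1), u (P.x i) * muPt a b (Jmp x₀ cc 1) (P.x i))
        + ∑ i ∈ Finset.range (P.n + 1), u (P.x i) * muPt a b B (P.x i) := by
    rw [← Finset.sum_add_distrib]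
    refine Finset.sum_congr rfl fun i hi => ?_
    rw [hmu _ (P.x_mem_s17 (Nat.lt_succ_iff.1 (Finset.mem_range.1 hi))), mul_add]
  have e2 : ∑ i ∈ Finset.range P.n,
        u ((P.x i + P.x (i + 1)) / 2) * muIoo a b A (P.x i) (P.x (i + 1))
      = (∑ i ∈ Finset.range P.n,
          u ((P.x i + P.x (i + 1)) / 2) * muIoo a b (Jmp x₀ cc 1) (P.x i) (P.x (i + 1)))
        + ∑ i ∈ Finset.range P.n,
          u ((P.x i + P.x (i + 1)) / 2) * muIoo a b B (P.x i) (P.x (i + 1)) := by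
    rw [← Finset.sum_add_distrib]
    refine Finset.sum_congr rfl fun i hi => ?_
    rw [hIoo i (Finset.mem_range.1 hi), mul_add]
  rw [e1, e2]
  linarith [hJ]

lemma stepInt_ge (hg : MonotoneOn g (Set.Icc a b)) (M : ℝ) (P : RDSPartition a b) {u : ℝ → ℝ}
    (hu : ∀ t ∈ Set.Icc a b, -M ≤ u t) : -M * (g b - g a) ≤ stepInt a b g P u := by
  have hmid : ∀ i, i < P.n → (P.x i + P.x (i + 1)) / 2 ∈ Set.Icc a b := by
    intro i hi
    have h1 := (P.x_mem_s17 (by omega : i ≤ P.n)).1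
    have h2 := (P.x_mem_s17 (by omega : i + 1 ≤ P.n)).2
    have h3 := P.mono i hi
    constructor <;> [linarith; linarith]
  have key : -M * (g b - g a)
      = (∑ i ∈ Finset.range (P.n + 1), -M * muPt a b g (P.x i))
        + ∑ i ∈ Finset.range P.n, -M * muIoo a b g (P.x i) (P.x (i + 1)) := by
    rw [← Finset.mul_sum, ← Finset.mul_sum, ← mul_add, mass_total g P]
  rw [key, stepInt]
  refine add_le_add (Finset.sum_le_sum fun i hi => ?_) (Finset.sum_le_sum fun i hi => ?_)
  · have hmem := P.x_mem_s17 (Nat.lt_succ_iff.1 (Finset.mem_range.1 hi))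
    exact mul_le_mul_of_nonneg_right (hu _ hmem) (muPt_nonneg hg hmem)
  · have hi' : i < P.n := Finset.mem_range.1 hi
    exact mul_le_mul_of_nonneg_right (hu _ (hmid i hi'))
      (muIoo_nonneg hg (P.x_mem_s17 (by omega : i ≤ P.n)).1 (P.mono i hi')
        (P.x_mem_s17 (by omega : i + 1 ≤ P.n)).2)

lemma stepInt_le (hg : MonotoneOn g (Set.Icc a b)) (M : ℝ) (P : RDSPartition a b) {u : ℝ → ℝ}
    (hu : ∀ t ∈ Set.Icc a b, u t ≤ M) : stepInt a b g P u ≤ M * (g b - g a) := by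
  have hmid : ∀ i, i < P.n → (P.x i + P.x (i + 1)) / 2 ∈ Set.Icc a b := by
    intro i hi
    have h1 := (P.x_mem_s17 (by omega : i ≤ P.n)).1
    have h2 := (P.x_mem_s17 (by omega : i + 1 ≤ P.n)).2
    have h3 := P.mono i hi
    constructor <;> [linarith; linarith]
  have key : M * (g b - g a)
      = (∑ i ∈ Finset.range (P.n + 1), M * muPt a b g (P.x i))
        + ∑ i ∈ Finset.range P.n, M * muIoo a b g (P.x i) (P.x (i + 1)) := by
    rw [← Finset.mul_sum, ← Finset.mul_sum, ← mul_add, mass_total g P]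
  rw [key, stepInt]
  refine add_le_add (Finset.sum_le_sum fun i hi => ?_) (Finset.sum_le_sum fun i hi => ?_)
  · have hmem := P.x_mem_s17 (Nat.lt_succ_iff.1 (Finset.mem_range.1 hi))
    exact mul_le_mul_of_nonneg_right (hu _ hmem) (muPt_nonneg hg hmem)
  · have hi' : i < P.n := Finset.mem_range.1 hi
    exact mul_le_mul_of_nonneg_right (hu _ (hmid i hi'))
      (muIoo_nonneg hg (P.x_mem_s17 (by omega : i ≤ P.n)).1 (P.mono i hi')
        (P.x_mem_s17 (by omega : i + 1 ≤ P.n)).2)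

end Aux4
section Aux5

variable {a b x₀ : ℝ} {g f : ℝ → ℝ}

/-- The trivial partition `a < b`. -/
noncomputable def onePart (a b : ℝ) (hab : a < b) : RDSPartition a b where
  n := 1
  x := fun i => if i = 0 then a else b
  mono := by
    intro i hi
    have : i = 0 := by omega
    simp [this, hab]
  first := by simp
  last := by simp

/-- The partition `a < x₀ < b`. -/
noncomputable def twoPart (a b x₀ : ℝ) (ha : a < x₀) (hb : x₀ < b) : RDSPartition a b where
  n := 2
  x := fun i => if i = 0 then a else if i = 1 then x₀ else b
  mono := by
    intro i hi
    interval_cases i <;> simp [ha, hb]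
  first := by simp
  last := by norm_num

lemma upper_nonempty (g : ℝ → ℝ) (hab : a < b) {M : ℝ} (hM : ∀ t ∈ Set.Icc a b, |f t| ≤ M) :
    { r | ∃ (u : ℝ → ℝ) (P : RDSPartition a b), IsStepOn a b u P ∧
      (∀ t ∈ Set.Icc a b, f t ≤ u t) ∧ r = stepInt a b g P u }.Nonempty :=
  ⟨stepInt a b g (onePart a b hab) (fun _ => M), fun _ => M, onePart a b hab,
    fun _ _ _ _ => rfl, fun t ht => (le_abs_self _).trans (hM t ht), rfl⟩

lemma lower_nonempty (g : ℝ → ℝ) (hab : a < b) {M : ℝ} (hM : ∀ t ∈ Set.Icc a b, |f t| ≤ M) :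
    { r | ∃ (v : ℝ → ℝ) (P : RDSPartition a b), IsStepOn a b v P ∧
      (∀ t ∈ Set.Icc a b, v t ≤ f t) ∧ r = stepInt a b g P v }.Nonempty :=
  ⟨stepInt a b g (onePart a b hab) (fun _ => -M), fun _ => -M, onePart a b hab,
    fun _ _ _ _ => rfl, fun t ht => (abs_le.1 (hM t ht)).1, rfl⟩

lemma upper_bddBelow (hg : MonotoneOn g (Set.Icc a b)) {M : ℝ}
    (hM : ∀ t ∈ Set.Icc a b, |f t| ≤ M) :
    BddBelow { r | ∃ (u : ℝ → ℝ) (P : RDSPartition a b), IsStepOn a b u P ∧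
      (∀ t ∈ Set.Icc a b, f t ≤ u t) ∧ r = stepInt a b g P u } := by
  refine ⟨-M * (g b - g a), ?_⟩
  rintro r ⟨u, P, hstep, hge, rfl⟩
  exact stepInt_ge hg M P fun t ht => ((abs_le.1 (hM t ht)).1).trans (hge t ht)

lemma lower_bddAbove (hg : MonotoneOn g (Set.Icc a b)) {M : ℝ}
    (hM : ∀ t ∈ Set.Icc a b, |f t| ≤ M) :
    BddAbove { r | ∃ (v : ℝ → ℝ) (P : RDSPartition a b), IsStepOn a b v P ∧
      (∀ t ∈ Set.Icc a b, v t ≤ f t) ∧ r = stepInt a b g P v } := by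
  refine ⟨M * (g b - g a), ?_⟩
  rintro r ⟨v, P, hstep, hle, rfl⟩
  exact stepInt_le hg M P fun t ht => (hle t ht).trans ((le_abs_self _).trans (hM t ht))

/-- Auxiliary step function equal to `f x₀` at `x₀` and a constant elsewhere. -/
lemma point_step (ha : a < x₀) (hb : x₀ < b) (K : ℝ) :
    IsStepOn a b (fun t => if t = x₀ then f x₀ else K) (twoPart a b x₀ ha hb) := by
  intro i hi s hs
  have hi2 : i < 2 := hi
  have hx0 : (twoPart a b x₀ ha hb).x 0 = a := rfl
  have hx1 : (twoPart a b x₀ ha hb).x 1 = x₀ := rfl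
  have hx2 : (twoPart a b x₀ ha hb).x 2 = b := rfl
  interval_cases i
  · rw [hx0, hx1] at hs ⊢
    have h1 : s ≠ x₀ := ne_of_lt hs.2
    have h2 : (a + x₀) / 2 ≠ x₀ := ne_of_lt (by linarith [hs.1])
    simp only [if_neg h1, if_neg h2]
  · rw [hx1, hx2] at hs ⊢
    have h1 : s ≠ x₀ := (lt_of_lt_of_le hs.1 le_rfl).ne'
    have h2 : (x₀ + b) / 2 ≠ x₀ := ne_of_gt (by linarith)
    simp only [if_neg h1, if_neg h2]

lemma upper_Jmp (ha : a < x₀) (hb : x₀ < b) {p q M : ℝ} (hq : 0 ≤ q)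
    (hM : ∀ t ∈ Set.Icc a b, |f t| ≤ M) :
    upperRDS a b (Jmp x₀ p q) f = q * f x₀ := by
  apply IsLeast.csInf_eq
  constructor
  · refine ⟨fun t => if t = x₀ then f x₀ else M, twoPart a b x₀ ha hb,
      point_step ha hb M, ?_, ?_⟩
    · intro t ht
      show f t ≤ if t = x₀ then f x₀ else M
      by_cases h : t = x₀
      · rw [if_pos h, h]
      · rw [if_neg h]
        exact (le_abs_self _).trans (hM t ht)
    · rw [stepInt_Jmp ha hb p q _ _ (point_step ha hb M), if_pos rfl]
  · rintro r ⟨u, P, hstep, hge, rfl⟩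
    rw [stepInt_Jmp ha hb p q P u hstep]
    exact mul_le_mul_of_nonneg_left (hge x₀ ⟨ha.le, hb.le⟩) hq

lemma lower_Jmp (ha : a < x₀) (hb : x₀ < b) {p q M : ℝ} (hq : 0 ≤ q)
    (hM : ∀ t ∈ Set.Icc a b, |f t| ≤ M) :
    lowerRDS a b (Jmp x₀ p q) f = q * f x₀ := by
  apply IsGreatest.csSup_eq
  constructor
  · refine ⟨fun t => if t = x₀ then f x₀ else -M, twoPart a b x₀ ha hb,
      point_step ha hb (-M), ?_, ?_⟩
    · intro t ht
      show (if t = x₀ then f x₀ else -M) ≤ f t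
      by_cases h : t = x₀
      · rw [if_pos h, h]
      · rw [if_neg h]
        exact (abs_le.1 (hM t ht)).1
    · rw [stepInt_Jmp ha hb p q _ _ (point_step ha hb (-M)), if_pos rfl]
  · rintro r ⟨v, P, hstep, hle, rfl⟩
    rw [stepInt_Jmp ha hb p q P v hstep]
    exact mul_le_mul_of_nonneg_left (hle x₀ ⟨ha.le, hb.le⟩) hq

end Aux5
theorem stmt17 (a b x₀ c : ℝ) (hx₀ : x₀ ∈ Set.Ioo a b) (f : ℝ → ℝ)
    (hf : BddOn a b f) :
    RDSIntegrable a b (fun t => Heav c (t - x₀)) f ∧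
    RDSIntegral a b (fun t => Heav c (t - x₀)) f = f x₀ := by
  obtain ⟨hax, hxb⟩ := hx₀
  obtain ⟨M, hM⟩ := hf
  have hab : a < b := hax.trans hxb
  have hp1 : (0 : ℝ) ≤ max c 0 := le_max_right c 0
  have hp2 : max c 0 ≤ |c| + 2 :=
    max_le ((le_abs_self c).trans (by linarith [abs_nonneg c])) (by positivity)
  have hm1 : (0 : ℝ) ≤ max (-c) 0 := le_max_right _ _
  have hm2 : max (-c) 0 ≤ |c| + 1 :=
    max_le ((neg_le_abs c).trans (by linarith [abs_nonneg c])) (by positivity)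
  have hq2 : (0 : ℝ) ≤ |c| + 2 := by positivity
  have hq1 : (0 : ℝ) ≤ |c| + 1 := by positivity
  have hmonop : MonotoneOn (Jmp x₀ (max c 0) (|c| + 2)) (Set.Icc a b) :=
    (Jmp_monotone hp1 hp2).monotoneOn _
  have hmonom : MonotoneOn (Jmp x₀ (max (-c) 0) (|c| + 1)) (Set.Icc a b) :=
    (Jmp_monotone hm1 hm2).monotoneOn _
  have hdiff : ∀ t ∈ Set.Icc a b,
      Heav c (t - x₀) = Jmp x₀ (max c 0) (|c| + 2) t - Jmp x₀ (max (-c) 0) (|c| + 1) t := by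
    intro t _
    rw [Heav_eq_Jmp]
    rcases lt_trichotomy t x₀ with h | h | h
    · rw [Jmp_of_lt h, Jmp_of_lt h, Jmp_of_lt h, sub_zero]
    · subst h
      rw [Jmp_self, Jmp_self, Jmp_self]
      exact (max_zero_sub_max_neg_zero_eq_self c).symm
    · rw [Jmp_of_gt h, Jmp_of_gt h, Jmp_of_gt h]; ring
  have hIncp : RDSIntegrableInc a b (Jmp x₀ (max c 0) (|c| + 2)) f := by
    show lowerRDS a b _ f = upperRDS a b _ f
    rw [upper_Jmp hax hxb hq2 hM, lower_Jmp hax hxb hq2 hM]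
  have hIncm : RDSIntegrableInc a b (Jmp x₀ (max (-c) 0) (|c| + 1)) f := by
    show lowerRDS a b _ f = upperRDS a b _ f
    rw [upper_Jmp hax hxb hq1 hM, lower_Jmp hax hxb hq1 hM]
  have hInt : RDSIntegrable a b (fun t => Heav c (t - x₀)) f :=
    ⟨_, _, hmonop, hmonom, fun t ht => hdiff t ht, hIncp, hIncm⟩
  refine ⟨hInt, ?_⟩
  rw [RDSIntegral, dif_pos hInt]
  set A := hInt.choose with hAdef
  set B := hInt.choose_spec.choose with hBdef
  obtain ⟨hmA, hmB, heqAB, hIncA, hIncB⟩ := hInt.choose_spec.choose_spec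
  have hIncA' : lowerRDS a b A f = upperRDS a b A f := hIncA
  have hIncB' : lowerRDS a b B f = upperRDS a b B f := hIncB
  have heq' : ∀ t ∈ Set.Icc a b, A t = Jmp x₀ c 1 t + B t := by
    intro t ht
    have h := heqAB t ht
    simp only [Heav_eq_Jmp] at h
    linarith
  have hdecomp : ∀ (P : RDSPartition a b) (u : ℝ → ℝ), IsStepOn a b u P →
      stepInt a b A P u = u x₀ + stepInt a b B P u :=
    fun P u hu => stepInt_decomp hax hxb hmB heq' P u hu
  show upperRDS a b A f - upperRDS a b B f = f x₀
  have h1 : f x₀ + upperRDS a b B f ≤ upperRDS a b A f := by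
    simp only [upperRDS]
    apply le_csInf (upper_nonempty A hab hM)
    rintro r ⟨u, P, hstep, hge, rfl⟩
    rw [hdecomp P u hstep]
    have h2 := csInf_le (upper_bddBelow (f := f) hmB hM) ⟨u, P, hstep, hge, rfl⟩
    have h3 := hge x₀ ⟨hax.le, hxb.le⟩
    linarith
  have h2 : upperRDS a b A f ≤ f x₀ + upperRDS a b B f := by
    rw [← hIncA', ← hIncB']
    simp only [lowerRDS]
    apply csSup_le (lower_nonempty A hab hM)
    rintro r ⟨v, P, hstep, hle, rfl⟩
    rw [hdecomp P v hstep]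
    have h4 := le_csSup (lower_bddAbove (f := f) hmB hM) ⟨v, P, hstep, hle, rfl⟩
    have h5 := hle x₀ ⟨hax.le, hxb.le⟩
    linarith
  linarith
end
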